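/- In the path-blocking inference for gene regulatory networks: suppose there exists a minimal blocking set S ∈ β(G_i) with G_j ∉ S such that S does not block G_j to P. Then the edge G_i → G_j does not exist in the GRN. -/
import Mathlib

/-- `Blocks E i S`: every directed path (in the graph `E` on genes `Fin n` plus a
phenotype vertex `Sum.inr ()`) from gene `i` to the phenotype passes through a
gene of `S`. -/
def Blocks {n : ℕ} (E : (Fin n ⊕ Unit) → (Fin n ⊕ Unit) → Prop)
    (i : Fin n) (S : Set (Fin n)) : Prop :=
  ¬ Relation.ReflTransGen
      (fun a b => E a b ∧ ∀ s : Fin n, b = Sum.inl s → s ∉ S)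
      (Sum.inl i) (Sum.inr ())

/-- If a minimal blocking set S for gene i does not contain gene j and does not
block j to the phenotype, then the edge i → j is absent from the GRN. -/
theorem edge_absent_from_path_blocking
    {n : ℕ} (E : (Fin n ⊕ Unit) → (Fin n ⊕ Unit) → Prop) (i j : Fin n)
    (S : Set (Fin n)) (hiS : i ∉ S) (hS : Blocks E i S)
    (hmin : ∀ S' : Set (Fin n), S' ⊂ S → ¬ Blocks E i S')
    (hjS : j ∉ S) (hj : ¬ Blocks E j S) :
    ¬ E (Sum.inl i) (Sum.inl j) := by
  intro hE
  apply hS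
  rw [Blocks, not_not] at hj
  exact Relation.ReflTransGen.head ⟨hE, fun s hs => by cases hs; exact hjS⟩ hj
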